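/- Proposition 3, second group. Let M ≥ 1, N ≥ 2 be integers and let ν be an integer with M+2 ≤ ν ≤ M+N. Set P_R = Π_{j=M+1}^{ν−2} (w_j − q w_{j+1}')(q w_j' − w_{j+1}) and S_R = 2^{−(ν−M−1)} Π_{j=M+1}^{ν−1} (w_j − q² w_j')(w_j' − w_j). Then, with respect to the pairs (w_{M+1}, w_{M+1}'), …, (w_{ν−1}, w_{ν−1}'), all carrying the fermionic exchange factor H^f, the following weak equalities hold: P_R (w_{ν−1} − q² w_{ν−1}') ∼ 0; w_{M+1} P_R (w_{ν−1} − q² w_{ν−1}') ∼ −S_R; w_{M+1}' P_R (w_{ν−1} − q² w_{ν−1}') ∼ S_R; (w_{M+1} − q² w_{M+1}') P_R ∼ 0; (w_{M+1} − q² w_{M+1}') P_R w_{ν−1} ∼ −S_R; and (w_{M+1} − q² w_{M+1}') P_R w_{ν−1}' ∼ S_R. -/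

import Mathlib

/-- Bosonic exchange factor `H^b(u,v) = -(q²v - u)/(q²u - v)`. -/
noncomputable def Hb (q u v : ℂ) : ℂ := -(q ^ 2 * v - u) / (q ^ 2 * u - v)

/-- Fermionic exchange factor `H^f(u,v) = -(q²u - v)/(q²v - u)`. -/
noncomputable def Hf (q u v : ℂ) : ℂ := -(q ^ 2 * u - v) / (q ^ 2 * v - u)

/-- Exchange factor assignment for `U_q(sl^(M|N))`: bosonic for `j < M`,
the constant `-1` for `j = M`, fermionic for `j > M`. -/
noncomputable def Hex (M : ℕ) (q : ℂ) (j : ℕ) : ℂ → ℂ → ℂ :=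
  if j < M then Hb q else if j = M then fun _ _ => -1 else Hf q

/-- Interchange `w_j` and `w_j'` for every `j ∈ σ`. -/
def swapOn (σ : Finset ℕ) (w w' : ℕ → ℂ) : ℕ → ℂ := fun j => if j ∈ σ then w' j else w j

/-- Weak equality `F ∼ G` with respect to the pairs `(w_j, w_j')`, `j ∈ J`,
carrying exchange factors `H j`. -/
def WeakEq (J : Finset ℕ) (H : ℕ → ℂ → ℂ → ℂ) (w w' : ℕ → ℂ)
    (F G : (ℕ → ℂ) → (ℕ → ℂ) → ℂ) : Prop :=
  ∑ σ ∈ J.powerset, (∏ j ∈ σ, H j (w' j) (w j)) * F (swapOn σ w w') (swapOn σ w' w)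
    = ∑ σ ∈ J.powerset, (∏ j ∈ σ, H j (w' j) (w j)) * G (swapOn σ w w') (swapOn σ w' w)

/-- `P_R = Π_{j=M+1}^{ν−2} (w_j − q w_{j+1}')(q w_j' − w_{j+1})`. -/
noncomputable def PR (q : ℂ) (M ν : ℕ) (u u' : ℕ → ℂ) : ℂ :=
  ∏ j ∈ Finset.Ico (M + 1) (ν - 1), (u j - q * u' (j + 1)) * (q * u' j - u (j + 1))

/-- `S_R = 2^{−(ν−M−1)} Π_{j=M+1}^{ν−1} (w_j − q² w_j')(w_j' − w_j)`. -/
noncomputable def SR (q : ℂ) (M ν : ℕ) (u u' : ℕ → ℂ) : ℂ :=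
  (1 / 2 ^ (ν - M - 1)) * ∏ j ∈ Finset.Ico (M + 1) ν, (u j - q ^ 2 * u' j) * (u' j - u j)

lemma hf_mul (q x y : ℂ) (h : q ^ 2 * x - y ≠ 0) :
    Hf q y x * (y - q ^ 2 * x) = q ^ 2 * y - x := by
  unfold Hf; field_simp; ring

lemma step_sum (H : ℕ → ℂ → ℂ → ℂ) (w w' : ℕ → ℂ) (J : Finset ℕ) (m : ℕ) (hm : m ∉ J)
    (F F' : (ℕ → ℂ) → (ℕ → ℂ) → ℂ) (c : ℂ)
    (hkey : ∀ u u' : ℕ → ℂ, u m = w m → u' m = w' m →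
      F u u' + H m (w' m) (w m) *
        F (Function.update u m (w' m)) (Function.update u' m (w m)) = c * F' u u') :
    ∑ σ ∈ (insert m J).powerset, (∏ j ∈ σ, H j (w' j) (w j)) * F (swapOn σ w w') (swapOn σ w' w)
      = c * ∑ σ ∈ J.powerset, (∏ j ∈ σ, H j (w' j) (w j)) * F' (swapOn σ w w') (swapOn σ w' w) := by
  rw [Finset.sum_powerset_insert hm, Finset.mul_sum, ← Finset.sum_add_distrib]
  refine Finset.sum_congr rfl fun σ hσ => ?_
  have hmσ : m ∉ σ := fun h => hm (Finset.mem_powerset.mp hσ h)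
  have h1 : swapOn (insert m σ) w w' = Function.update (swapOn σ w w') m (w' m) := by
    funext j
    by_cases hj : j = m
    · subst hj; simp [swapOn, Function.update_self]
    · simp [swapOn, Function.update_of_ne hj, Finset.mem_insert, hj]
  have h2 : swapOn (insert m σ) w' w = Function.update (swapOn σ w' w) m (w m) := by
    funext j
    by_cases hj : j = m
    · subst hj; simp [swapOn, Function.update_self]
    · simp [swapOn, Function.update_of_ne hj, Finset.mem_insert, hj]
  rw [Finset.prod_insert hmσ, h1, h2]
  have h3 := hkey (swapOn σ w w') (swapOn σ w' w) (by simp [swapOn, hmσ]) (by simp [swapOn, hmσ])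
  linear_combination (∏ j ∈ σ, H j (w' j) (w j)) * h3

lemma PR_update (q : ℂ) (M ν m : ℕ) (hm : m ≤ M ∨ ν ≤ m) (u u' : ℕ → ℂ) (a b : ℂ) :
    PR q M ν (Function.update u m a) (Function.update u' m b) = PR q M ν u u' := by
  unfold PR
  refine Finset.prod_congr rfl fun j hj => ?_
  have hj' := Finset.mem_Ico.mp hj
  rw [Function.update_of_ne (by omega), Function.update_of_ne (by omega),
    Function.update_of_ne (by omega), Function.update_of_ne (by omega)]

lemma PR_split (q : ℂ) (M m : ℕ) (h : M + 2 ≤ m) (v v' : ℕ → ℂ) :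
    PR q M (m + 1) v v' =
      PR q M m v v' * ((v (m - 1) - q * v' m) * (q * v' (m - 1) - v m)) := by
  unfold PR
  have h1 : m + 1 - 1 = m := rfl
  rw [h1]
  conv_lhs => rw [show m = m - 1 + 1 from by omega]
  rw [Finset.prod_Ico_succ_top (by omega)]
  rw [show m - 1 + 1 = m from by omega]

lemma PR_split_bot (q : ℂ) (M ν : ℕ) (h : M + 3 ≤ ν) (v v' : ℕ → ℂ) :
    PR q M ν v v' =
      ((v (M + 1) - q * v' (M + 2)) * (q * v' (M + 1) - v (M + 2))) * PR q (M + 1) ν v v' := by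
  unfold PR
  rw [Finset.prod_eq_prod_Ico_succ_bot (show M + 1 < ν - 1 by omega)]


lemma lemA (q : ℂ) (G : ℂ → ℂ → ℂ) (c : ℂ)
    (hG : ∀ x y : ℂ, G x y - G y x = c * (y - x)) :
    ∀ n M ν, ν = M + 2 + n → ∀ w w' : ℕ → ℂ,
      (∀ j ∈ Finset.Ico (M + 1) ν, q ^ 2 * w j ≠ w' j) →
      ∑ σ ∈ (Finset.Ico (M + 1) ν).powerset, (∏ j ∈ σ, Hf q (w' j) (w j)) *
        (G (swapOn σ w w' (M + 1)) (swapOn σ w' w (M + 1)) *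
          PR q M ν (swapOn σ w w') (swapOn σ w' w) *
          (swapOn σ w w' (ν - 1) - q ^ 2 * swapOn σ w' w (ν - 1)))
      = c * ∏ j ∈ Finset.Ico (M + 1) ν, (w j - q ^ 2 * w' j) * (w' j - w j) := by
  intro n
  induction n with
  | zero =>
    intro M ν hν w w' hden
    obtain rfl : ν = M + 2 := by omega
    have hd : q ^ 2 * w (M + 1) - w' (M + 1) ≠ 0 := by
      have := hden (M + 1) (Finset.mem_Ico.mpr ⟨by omega, by omega⟩)
      exact sub_ne_zero.mpr this
    have hsing : Finset.Ico (M + 1) (M + 2) = insert (M + 1) (∅ : Finset ℕ) := by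
      rw [show M + 2 = (M + 1) + 1 from rfl, Nat.Ico_succ_singleton]; rfl
    rw [hsing, Finset.sum_powerset_insert (by simp), Finset.powerset_empty,
      Finset.sum_singleton, Finset.sum_singleton]
    have hPR : ∀ u u' : ℕ → ℂ, PR q M (M + 2) u u' = 1 := by
      intro u u'; unfold PR; rw [show M + 2 - 1 = M + 1 from rfl]; simp
    have e1 : M + 2 - 1 = M + 1 := rfl
    rw [e1, hPR, hPR]
    simp only [Finset.prod_empty, Finset.prod_insert (Finset.notMem_empty _), one_mul, mul_one,
      swapOn, Finset.mem_insert, Finset.notMem_empty, if_true, if_false, or_false, if_pos rfl]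
    have h2 := hf_mul q (w (M + 1)) (w' (M + 1)) hd
    linear_combination (G (w' (M + 1)) (w (M + 1))) * h2 +
      (w (M + 1) - q ^ 2 * w' (M + 1)) * hG (w (M + 1)) (w' (M + 1))
  | succ n ih =>
    intro M ν hν w w' hden
    obtain rfl : ν = (M + 2 + n) + 1 := by omega
    set m := M + 2 + n with hm
    have e1 : m + 1 - 1 = m := rfl
    rw [e1]
    have hins : Finset.Ico (M + 1) (m + 1) = insert m (Finset.Ico (M + 1) m) :=
      Nat.Ico_succ_right_eq_insert_Ico (by omega)
    rw [hins]
    have hdm : q ^ 2 * w m - w' m ≠ 0 :=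
      sub_ne_zero.mpr (hden m (Finset.mem_Ico.mpr ⟨by omega, by omega⟩))
    have h2 := hf_mul q (w m) (w' m) hdm
    rw [step_sum (fun _ => Hf q) w w' (Finset.Ico (M + 1) m) m (by simp)
      (fun u u' => G (u (M + 1)) (u' (M + 1)) * PR q M (m + 1) u u' * (u m - q ^ 2 * u' m))
      (fun u u' => G (u (M + 1)) (u' (M + 1)) * PR q M m u u' *
        (u (m - 1) - q ^ 2 * u' (m - 1)))
      ((w m - q ^ 2 * w' m) * (w' m - w m))
      ?hkey]
    · rw [ih M m rfl w w' (fun j hj => hden j (by rw [hins]; exact Finset.mem_insert_of_mem hj))]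
      rw [Finset.prod_insert (by simp)]
      ring
    · intro u u' hu hu'
      rw [Function.update_of_ne (show M + 1 ≠ m by omega), Function.update_of_ne (show M + 1 ≠ m by omega),
        Function.update_self, Function.update_self]
      rw [PR_split q M m (by omega), PR_split q M m (by omega)]
      rw [PR_update q M m m (Or.inr le_rfl)]
      rw [Function.update_of_ne (show m - 1 ≠ m by omega), Function.update_of_ne (show m - 1 ≠ m by omega),
        Function.update_self, Function.update_self]
      rw [hu, hu']
      linear_combination (G (u (M + 1)) (u' (M + 1)) * PR q M m u u' *
        (u (m - 1) - q * w m) * (q * u' (m - 1) - w' m)) * h2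

lemma lemB (q : ℂ) (G : ℂ → ℂ → ℂ) (c : ℂ)
    (hG : ∀ x y : ℂ, G x y - G y x = c * (y - x)) :
    ∀ n M ν, ν = M + 2 + n → ∀ w w' : ℕ → ℂ,
      (∀ j ∈ Finset.Ico (M + 1) ν, q ^ 2 * w j ≠ w' j) →
      ∑ σ ∈ (Finset.Ico (M + 1) ν).powerset, (∏ j ∈ σ, Hf q (w' j) (w j)) *
        ((swapOn σ w w' (M + 1) - q ^ 2 * swapOn σ w' w (M + 1)) *
          PR q M ν (swapOn σ w w') (swapOn σ w' w) *
          G (swapOn σ w w' (ν - 1)) (swapOn σ w' w (ν - 1)))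
      = c * ∏ j ∈ Finset.Ico (M + 1) ν, (w j - q ^ 2 * w' j) * (w' j - w j) := by
  intro n
  induction n with
  | zero =>
    intro M ν hν w w' hden
    obtain rfl : ν = M + 2 := by omega
    have hd : q ^ 2 * w (M + 1) - w' (M + 1) ≠ 0 := by
      have := hden (M + 1) (Finset.mem_Ico.mpr ⟨by omega, by omega⟩)
      exact sub_ne_zero.mpr this
    have hsing : Finset.Ico (M + 1) (M + 2) = insert (M + 1) (∅ : Finset ℕ) := by
      rw [show M + 2 = (M + 1) + 1 from rfl, Nat.Ico_succ_singleton]; rfl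
    rw [hsing, Finset.sum_powerset_insert (by simp), Finset.powerset_empty,
      Finset.sum_singleton, Finset.sum_singleton]
    have hPR : ∀ u u' : ℕ → ℂ, PR q M (M + 2) u u' = 1 := by
      intro u u'; unfold PR; rw [show M + 2 - 1 = M + 1 from rfl]; simp
    have e1 : M + 2 - 1 = M + 1 := rfl
    rw [e1, hPR, hPR]
    simp only [Finset.prod_empty, Finset.prod_insert (Finset.notMem_empty _), one_mul, mul_one,
      swapOn, Finset.mem_insert, Finset.notMem_empty, if_true, if_false, or_false, if_pos rfl]
    have h2 := hf_mul q (w (M + 1)) (w' (M + 1)) hd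
    linear_combination (G (w' (M + 1)) (w (M + 1))) * h2 +
      (w (M + 1) - q ^ 2 * w' (M + 1)) * hG (w (M + 1)) (w' (M + 1))
  | succ n ih =>
    intro M ν hν w w' hden
    obtain rfl : ν = M + 3 + n := by omega
    have hins : Finset.Ico (M + 1) (M + 3 + n) =
        insert (M + 1) (Finset.Ico (M + 2) (M + 3 + n)) := by
      rw [show M + 2 = (M + 1) + 1 from rfl]
      exact (Finset.insert_Ico_add_one_left_eq_Ico (by omega)).symm
    rw [hins]
    have hdm : q ^ 2 * w (M + 1) - w' (M + 1) ≠ 0 :=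
      sub_ne_zero.mpr (hden (M + 1) (Finset.mem_Ico.mpr ⟨by omega, by omega⟩))
    have h2 := hf_mul q (w (M + 1)) (w' (M + 1)) hdm
    rw [step_sum (fun _ => Hf q) w w' (Finset.Ico (M + 2) (M + 3 + n)) (M + 1)
      (by simp [Finset.mem_Ico])
      (fun u u' => (u (M + 1) - q ^ 2 * u' (M + 1)) * PR q M (M + 3 + n) u u' *
        G (u (M + 3 + n - 1)) (u' (M + 3 + n - 1)))
      (fun u u' => (u (M + 2) - q ^ 2 * u' (M + 2)) * PR q (M + 1) (M + 3 + n) u u' *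
        G (u (M + 3 + n - 1)) (u' (M + 3 + n - 1)))
      ((w (M + 1) - q ^ 2 * w' (M + 1)) * (w' (M + 1) - w (M + 1)))
      ?hkey]
    · have ihh := ih (M + 1) (M + 3 + n) (by omega) w w'
        (fun j hj => hden j (by rw [hins]; exact Finset.mem_insert_of_mem hj))
      rw [show (M + 1) + 1 = M + 2 from rfl] at ihh
      rw [ihh]
      rw [Finset.prod_insert (by simp [Finset.mem_Ico])]
      ring
    · intro u u' hu hu'
      rw [Function.update_self, Function.update_self,
        Function.update_of_ne (show M + 3 + n - 1 ≠ M + 1 by omega),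
        Function.update_of_ne (show M + 3 + n - 1 ≠ M + 1 by omega)]
      rw [PR_split_bot q M (M + 3 + n) (by omega), PR_split_bot q M (M + 3 + n) (by omega)]
      rw [PR_update q (M + 1) (M + 3 + n) (M + 1) (Or.inl (by omega))]
      rw [Function.update_self, Function.update_self,
        Function.update_of_ne (show M + 2 ≠ M + 1 by omega),
        Function.update_of_ne (show M + 2 ≠ M + 1 by omega)]
      rw [hu, hu']
      linear_combination ((w' (M + 1) - q * u' (M + 2)) * (q * w (M + 1) - u (M + 2)) *
        PR q (M + 1) (M + 3 + n) u u' * G (u (M + 3 + n - 1)) (u' (M + 3 + n - 1))) * h2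
lemma lemC (q : ℂ) (M ν : ℕ) (hν : M + 2 ≤ ν) (w w' : ℕ → ℂ)
    (hden : ∀ j ∈ Finset.Ico (M + 1) ν, q ^ 2 * w j ≠ w' j) :
    ∑ σ ∈ (Finset.Ico (M + 1) ν).powerset, (∏ j ∈ σ, Hf q (w' j) (w j)) *
        SR q M ν (swapOn σ w w') (swapOn σ w' w)
      = ∏ j ∈ Finset.Ico (M + 1) ν, (w j - q ^ 2 * w' j) * (w' j - w j) := by
  set J := Finset.Ico (M + 1) ν with hJ
  have hcard : J.card = ν - M - 1 := by rw [hJ, Nat.card_Ico]; omega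
  have key : ∀ σ ∈ J.powerset,
      (∏ j ∈ σ, Hf q (w' j) (w j)) * SR q M ν (swapOn σ w w') (swapOn σ w' w)
      = (1 / 2 ^ (ν - M - 1)) *
        ((∏ j ∈ σ, Hf q (w' j) (w j) * ((w' j - q ^ 2 * w j) * (w j - w' j))) *
          ∏ j ∈ J \ σ, (w j - q ^ 2 * w' j) * (w' j - w j)) := by
    intro σ hσ
    have hσJ : σ ⊆ J := Finset.mem_powerset.mp hσ
    unfold SR
    rw [← hJ, ← Finset.prod_sdiff hσJ]
    have e1 : ∏ j ∈ σ, (swapOn σ w w' j - q ^ 2 * swapOn σ w' w j) *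
        (swapOn σ w' w j - swapOn σ w w' j)
        = ∏ j ∈ σ, (w' j - q ^ 2 * w j) * (w j - w' j) :=
      Finset.prod_congr rfl fun j hj => by simp [swapOn, hj]
    have e2 : ∏ j ∈ J \ σ, (swapOn σ w w' j - q ^ 2 * swapOn σ w' w j) *
        (swapOn σ w' w j - swapOn σ w w' j)
        = ∏ j ∈ J \ σ, (w j - q ^ 2 * w' j) * (w' j - w j) :=
      Finset.prod_congr rfl fun j hj => by
        have : j ∉ σ := (Finset.mem_sdiff.mp hj).2
        simp [swapOn, this]
    rw [e1, e2]
    simp only [Finset.prod_mul_distrib]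
    ring
  rw [Finset.sum_congr rfl key, ← Finset.mul_sum, ← Finset.prod_add]
  have e3 : ∏ j ∈ J, (Hf q (w' j) (w j) * ((w' j - q ^ 2 * w j) * (w j - w' j)) +
      (w j - q ^ 2 * w' j) * (w' j - w j))
      = ∏ j ∈ J, 2 * ((w j - q ^ 2 * w' j) * (w' j - w j)) := by
    refine Finset.prod_congr rfl fun j hj => ?_
    have h2 := hf_mul q (w j) (w' j) (sub_ne_zero.mpr (hden j hj))
    linear_combination (w j - w' j) * h2
  rw [e3, Finset.prod_mul_distrib, Finset.prod_const, hcard]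
  have h20 : (2 : ℂ) ^ (ν - M - 1) ≠ 0 := pow_ne_zero _ two_ne_zero
  field_simp

/-- Proposition 3, second group: six weak equalities for the fermionic pairs
`(w_{M+1}, w_{M+1}'), …, (w_{ν−1}, w_{ν−1}')`. -/
theorem proposition3_second (M N : ℕ) (hM : 1 ≤ M) (hN : 2 ≤ N)
    (ν : ℕ) (hν1 : M + 2 ≤ ν) (hν2 : ν ≤ M + N)
    (q : ℂ) (hq : q ≠ 0) (hq2 : q ^ 2 ≠ 1) (w w' : ℕ → ℂ)
    (hden : ∀ j ∈ Finset.Ico (M + 1) ν, q ^ 2 * w j ≠ w' j) :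
    WeakEq (Finset.Ico (M + 1) ν) (fun _ => Hf q) w w'
      (fun u u' => PR q M ν u u' * (u (ν - 1) - q ^ 2 * u' (ν - 1))) (fun _ _ => 0) ∧
    WeakEq (Finset.Ico (M + 1) ν) (fun _ => Hf q) w w'
      (fun u u' => u (M + 1) * PR q M ν u u' * (u (ν - 1) - q ^ 2 * u' (ν - 1)))
      (fun u u' => -SR q M ν u u') ∧
    WeakEq (Finset.Ico (M + 1) ν) (fun _ => Hf q) w w'
      (fun u u' => u' (M + 1) * PR q M ν u u' * (u (ν - 1) - q ^ 2 * u' (ν - 1)))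
      (fun u u' => SR q M ν u u') ∧
    WeakEq (Finset.Ico (M + 1) ν) (fun _ => Hf q) w w'
      (fun u u' => (u (M + 1) - q ^ 2 * u' (M + 1)) * PR q M ν u u') (fun _ _ => 0) ∧
    WeakEq (Finset.Ico (M + 1) ν) (fun _ => Hf q) w w'
      (fun u u' => (u (M + 1) - q ^ 2 * u' (M + 1)) * PR q M ν u u' * u (ν - 1))
      (fun u u' => -SR q M ν u u') ∧
    WeakEq (Finset.Ico (M + 1) ν) (fun _ => Hf q) w w'
      (fun u u' => (u (M + 1) - q ^ 2 * u' (M + 1)) * PR q M ν u u' * u' (ν - 1))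
      (fun u u' => SR q M ν u u') := by
  have hνe : ν = M + 2 + (ν - M - 2) := by omega
  have C := lemC q M ν hν1 w w' hden
  have hneg : ∑ σ ∈ (Finset.Ico (M + 1) ν).powerset, (∏ j ∈ σ, Hf q (w' j) (w j)) *
      (-SR q M ν (swapOn σ w w') (swapOn σ w' w))
      = -∏ j ∈ Finset.Ico (M + 1) ν, (w j - q ^ 2 * w' j) * (w' j - w j) := by
    rw [← C, ← Finset.sum_neg_distrib]
    exact Finset.sum_congr rfl fun σ _ => by ring
  refine ⟨?_, ?_, ?_, ?_, ?_, ?_⟩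
  · have L := lemA q (fun _ _ => (1 : ℂ)) 0 (fun x y => by ring)
      (ν - M - 2) M ν hνe w w' hden
    unfold WeakEq
    simp only [one_mul, zero_mul] at L
    simpa using L
  · have L := lemA q (fun x _ => x) (-1) (fun x y => by ring)
      (ν - M - 2) M ν hνe w w' hden
    unfold WeakEq
    rw [L]
    rw [hneg]
    ring
  · have L := lemA q (fun _ y => y) 1 (fun x y => by ring)
      (ν - M - 2) M ν hνe w w' hden
    unfold WeakEq
    rw [L, C]
    ring
  · have L := lemB q (fun _ _ => (1 : ℂ)) 0 (fun x y => by ring)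
      (ν - M - 2) M ν hνe w w' hden
    unfold WeakEq
    simp only [mul_one, zero_mul] at L
    simpa using L
  · have L := lemB q (fun x _ => x) (-1) (fun x y => by ring)
      (ν - M - 2) M ν hνe w w' hden
    unfold WeakEq
    rw [L]
    rw [hneg]
    ring
  · have L := lemB q (fun _ y => y) 1 (fun x y => by ring)
      (ν - M - 2) M ν hνe w w' hden
    unfold WeakEq
    rw [L, C]
    ring
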